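/- The Hemlock algorithm is deadlock-free: in every execution of the Hemlock transition-system model, if at some state some thread is in the entry code for a lock L, then eventually some thread enters the critical section protected by L. (This follows from lockout-freedom, which is a stronger property.) -/
import Mathlib


namespace Hemlock

/-- Program counter locations of a thread in the Hemlock algorithm. -/
inductive PC where
  | remainder  -- in the remainder section
  | entrySpin  -- in the entry code, spinning on the predecessor's Grant field
  | crit       -- in the critical section
  | exitCAS    -- in the exit code, about to perform the CAS on Tail
  | exitDoor   -- in the exit code, about to perform the exit doorstep (write Grant self := some L)
  | exitSpin   -- in the exit code, spinning on its own Grant field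
deriving DecidableEq

/-- A global state of the Hemlock transition system. -/
structure St (Thread Lock : Type) where
  Tail : Lock → Option Thread        -- the Tail field of each lock
  Grant : Thread → Option Lock       -- the Grant field of each thread
  pc : Thread → PC                   -- program counter of each thread
  lk : Thread → Option Lock          -- the lock currently being acquired/released by each thread
  pred : Thread → Option Thread      -- value returned by each thread's last SWAP

variable {Thread Lock : Type} [DecidableEq Thread] [DecidableEq Lock]

/-- The initial state: all Tail and Grant fields are none, all threads in the remainder. -/
def initSt : St Thread Lock :=
  ⟨fun _ => none, fun _ => none, fun _ => .remainder, fun _ => none, fun _ => none⟩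

/-- One atomic transition of thread `t`. -/
inductive Step (t : Thread) : St Thread Lock → St Thread Lock → Prop where
  /-- a step inside the remainder section -/
  | remainderStay (s : St Thread Lock) (h : s.pc t = .remainder) :
      Step t s s
  /-- the entry doorstep for lock `L`: atomic SWAP on `Tail L`, storing the old value in `pred`;
      if the SWAP returned `none` the thread enters the critical section, else it spins -/
  | doorstep (s : St Thread Lock) (L : Lock) (h : s.pc t = .remainder) :
      Step t s ⟨Function.update s.Tail L (some t), s.Grant,
        Function.update s.pc t (if s.Tail L = none then .crit else .entrySpin),
        Function.update s.lk t (some L),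
        Function.update s.pred t (s.Tail L)⟩
  /-- entry-code busy-wait loop: read `Grant p`; it is not yet `some L`, keep spinning -/
  | spinWait (s : St Thread Lock) (p : Thread) (L : Lock)
      (h : s.pc t = .entrySpin) (hp : s.pred t = some p) (hl : s.lk t = some L)
      (hg : s.Grant p ≠ some L) :
      Step t s s
  /-- entry-code busy-wait loop: read `Grant p = some L`; write `Grant p := none`
      and enter the critical section -/
  | spinAcquire (s : St Thread Lock) (p : Thread) (L : Lock)
      (h : s.pc t = .entrySpin) (hp : s.pred t = some p) (hl : s.lk t = some L)
      (hg : s.Grant p = some L) :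
      Step t s ⟨s.Tail, Function.update s.Grant p none,
        Function.update s.pc t .crit, s.lk, s.pred⟩
  /-- a step inside the critical section -/
  | critStay (s : St Thread Lock) (h : s.pc t = .crit) :
      Step t s s
  /-- leave the critical section and begin the exit code -/
  | exitStart (s : St Thread Lock) (h : s.pc t = .crit) :
      Step t s ⟨s.Tail, s.Grant, Function.update s.pc t .exitCAS, s.lk, s.pred⟩
  /-- successful CAS: `Tail L = some self`, so set `Tail L := none` and
      complete the exit code, returning to the remainder section -/
  | casSucc (s : St Thread Lock) (L : Lock)
      (h : s.pc t = .exitCAS) (hl : s.lk t = some L) (ht : s.Tail L = some t) :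
      Step t s ⟨Function.update s.Tail L none, s.Grant,
        Function.update s.pc t .remainder, Function.update s.lk t none, s.pred⟩
  /-- failed CAS: `Tail L ≠ some self`; proceed to the exit doorstep -/
  | casFail (s : St Thread Lock) (L : Lock)
      (h : s.pc t = .exitCAS) (hl : s.lk t = some L) (ht : s.Tail L ≠ some t) :
      Step t s ⟨s.Tail, s.Grant, Function.update s.pc t .exitDoor, s.lk, s.pred⟩
  /-- the exit doorstep: write `Grant self := some L` and start spinning on `Grant self` -/
  | exitDoorstep (s : St Thread Lock) (L : Lock)
      (h : s.pc t = .exitDoor) (hl : s.lk t = some L) :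
      Step t s ⟨s.Tail, Function.update s.Grant t (some L),
        Function.update s.pc t .exitSpin, s.lk, s.pred⟩
  /-- exit-code busy-wait loop: read `Grant self`; it is not yet `none`, keep spinning -/
  | exitSpinWait (s : St Thread Lock) (h : s.pc t = .exitSpin) (hg : s.Grant t ≠ none) :
      Step t s s
  /-- exit-code busy-wait loop: read `Grant self = none`; complete the exit code,
      returning to the remainder section -/
  | exitDone (s : St Thread Lock) (h : s.pc t = .exitSpin) (hg : s.Grant t = none) :
      Step t s ⟨s.Tail, s.Grant, Function.update s.pc t .remainder,
        Function.update s.lk t none, s.pred⟩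

/-- An execution of the Hemlock transition system: an infinite sequence of states starting
    from the initial state, where each step is one transition of the scheduled thread;
    every thread whose program counter is in the entry, exit or critical section eventually
    takes another step, and every thread leaves each critical section after finitely
    many steps. -/
structure Execution (Thread Lock : Type) [DecidableEq Thread] [DecidableEq Lock]
    [Fintype Thread] where
  states : ℕ → St Thread Lock
  sched : ℕ → Thread
  init : states 0 = initSt
  steps : ∀ n, Step (sched n) (states n) (states (n + 1))
  fair : ∀ n t, (states n).pc t ≠ PC.remainder → ∃ m, n ≤ m ∧ sched m = t
  critFinite : ∀ n t, (states n).pc t = PC.crit → ∃ m, n ≤ m ∧ (states m).pc t ≠ PC.crit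

variable [Fintype Thread]

/-- Thread `t` executes the entry doorstep (the SWAP) for lock `L` at time `n`. -/
def doorstepAt (E : Execution Thread Lock) (n : ℕ) (t : Thread) (L : Lock) : Prop :=
  E.sched n = t ∧ (E.states n).pc t = PC.remainder ∧
    (E.states (n + 1)).pc t ≠ PC.remainder ∧ (E.states (n + 1)).lk t = some L

/-- Thread `t` performs the CAS step of the exit code for lock `L` at time `n`
    (successful or not). -/
def casAt (E : Execution Thread Lock) (n : ℕ) (t : Thread) (L : Lock) : Prop :=
  E.sched n = t ∧ (E.states n).pc t = PC.exitCAS ∧ (E.states n).lk t = some L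

/-- Thread `t` performs the exit doorstep (the write `Grant t := some L`) at time `n`. -/
def exitDoorAt (E : Execution Thread Lock) (n : ℕ) (t : Thread) (L : Lock) : Prop :=
  E.sched n = t ∧ (E.states n).pc t = PC.exitDoor ∧ (E.states n).lk t = some L

/-- Thread `t` is in the critical section protected by `L` in state `s`. -/
def inCS (s : St Thread Lock) (t : Thread) (L : Lock) : Prop :=
  s.pc t = PC.crit ∧ s.lk t = some L

/-- Thread `t` is in the entry code for lock `L` in state `s`. -/
def inEntry (s : St Thread Lock) (t : Thread) (L : Lock) : Prop :=
  s.pc t = PC.entrySpin ∧ s.lk t = some L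

/-- Thread `t` enters the critical section protected by `L` at step `m`. -/
def entersCSAt (E : Execution Thread Lock) (m : ℕ) (t : Thread) (L : Lock) : Prop :=
  E.sched m = t ∧ (E.states m).pc t ≠ PC.crit ∧
    (E.states (m + 1)).pc t = PC.crit ∧ (E.states (m + 1)).lk t = some L

/-- Thread `t` completes its critical section protected by `L` at step `k`
    (leaving the critical section and beginning the exit code). -/
def exitsCSAt (E : Execution Thread Lock) (k : ℕ) (t : Thread) (L : Lock) : Prop :=
  E.sched k = t ∧ (E.states k).pc t = PC.crit ∧ (E.states k).lk t = some L ∧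
    (E.states (k + 1)).pc t ≠ PC.crit

/-- Thread `t` completes the exit code for lock `L` at step `k`
    (returning to the remainder section). -/
def completesExitAt (E : Execution Thread Lock) (k : ℕ) (t : Thread) (L : Lock) : Prop :=
  E.sched k = t ∧ (E.states k).lk t = some L ∧
    (E.states k).pc t ≠ PC.remainder ∧ (E.states (k + 1)).pc t = PC.remainder

/-- `m` is the first time at or after `n` at which thread `t` enters the
    critical section protected by `L`. -/
def firstEntryAfter (E : Execution Thread Lock) (n m : ℕ) (t : Thread) (L : Lock) : Prop :=
  n ≤ m ∧ entersCSAt E m t L ∧ ∀ k, n ≤ k → k < m → ¬ entersCSAt E k t L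

/-- At time `n`, thread `T` is spinning in the entry code waiting for `Grant w`
    to become `some L`: its next step reads `Grant w` inside the entry-code
    busy-wait loop with current lock `L` and `pred = some w`. -/
def spinningEntryFor (E : Execution Thread Lock) (n : ℕ) (T w : Thread) (L : Lock) : Prop :=
  (E.states n).pc T = PC.entrySpin ∧ (E.states n).pred T = some w ∧
    (E.states n).lk T = some L

/-- At time `n`, thread `T` is spinning on the word `Grant w`: its next step reads
    `Grant w` inside one of the two busy-wait loops (the entry-code loop with
    `pred = some w`, or the exit-code loop executed by `w` itself). -/
def spinningOn (E : Execution Thread Lock) (n : ℕ) (T w : Thread) : Prop :=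
  ((E.states n).pc T = PC.entrySpin ∧ (E.states n).pred T = some w) ∨
    (T = w ∧ (E.states n).pc T = PC.exitSpin)

/-- Lock `L` is associated with thread `T` at time `n`: `T` has executed the entry
    doorstep for `L` and has not yet completed the exit code for `L`. -/
def associated (E : Execution Thread Lock) (n : ℕ) (T : Thread) (L : Lock) : Prop :=
  ∃ m, m < n ∧ doorstepAt E m T L ∧ ∀ k, m < k → k < n → ¬ completesExitAt E k T L


set_option linter.dupNamespace false
set_option linter.unusedSectionVars false


lemma pc_frame {u : Thread} {s s' : St Thread Lock} (h : Step u s s') {t : Thread}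
    (ht : t ≠ u) : s'.pc t = s.pc t := by
  cases h <;> simp [Function.update_of_ne ht]

lemma lk_frame {u : Thread} {s s' : St Thread Lock} (h : Step u s s') {t : Thread}
    (ht : t ≠ u) : s'.lk t = s.lk t := by
  cases h <;> simp [Function.update_of_ne ht]

lemma pred_frame {u : Thread} {s s' : St Thread Lock} (h : Step u s s') {t : Thread}
    (ht : t ≠ u) : s'.pred t = s.pred t := by
  cases h <;> simp [Function.update_of_ne ht]

structure SInv (s : St Thread Lock) : Prop where
  lkSome : ∀ t, s.pc t ≠ PC.remainder → s.lk t ≠ none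
  predSome : ∀ t, s.pc t = PC.entrySpin → s.pred t ≠ none
  grantPC : ∀ w l, s.Grant w = some l → s.pc w = PC.exitSpin ∧ s.lk w = some l
  tailPC : ∀ l w, s.Tail l = some w → s.pc w ≠ PC.remainder ∧ s.lk w = some l
  exitTail : ∀ w l, s.pc w = PC.exitDoor ∨ s.pc w = PC.exitSpin → s.lk w = some l → s.Tail l ≠ some w
  waitTail : ∀ t w l, s.pc t = PC.entrySpin → s.lk t = some l → s.pred t = some w → s.Tail l ≠ some w
  waitPred : ∀ t w l, s.pc t = PC.entrySpin → s.lk t = some l → s.pred t = some w → s.pc w ≠ PC.remainder ∧ s.lk w = some l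
  inj : ∀ t t' w, s.pc t = PC.entrySpin → s.pred t = some w → s.pc t' = PC.entrySpin → s.pred t' = some w → t = t'
  exitGrant : ∀ w t, s.pc w = PC.exitSpin → s.Grant w = none → s.pc t = PC.entrySpin → s.pred t ≠ some w

lemma inv_init : SInv (initSt : St Thread Lock) := by
  constructor <;> simp [initSt]


lemma inv_doorstep {u : Thread} {s : St Thread Lock} (hi : SInv s) (L : Lock)
    (h : s.pc u = PC.remainder) :
    SInv ⟨Function.update s.Tail L (some u), s.Grant,
        Function.update s.pc u (if s.Tail L = none then .crit else .entrySpin),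
        Function.update s.lk u (some L),
        Function.update s.pred u (s.Tail L)⟩ := by
  obtain ⟨lkSome, predSome, grantPC, tailPC, exitTail, waitTail, waitPred, inj, exitGrant⟩ := hi
  have hub : ∀ v : Thread, s.pc v ≠ PC.remainder → v ≠ u := fun v hv e => hv (by rw [e, h])
  rcases hT : s.Tail L with _ | w0
  · refine ⟨?_, ?_, ?_, ?_, ?_, ?_, ?_, ?_, ?_⟩ <;> dsimp only
    · intro t ht
      rcases eq_or_ne t u with rfl | htu
      · simp
      · simp only [Function.update_of_ne htu] at *; exact lkSome t ht
    · intro t ht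
      rcases eq_or_ne t u with rfl | htu
      · simp at ht
      · simp only [Function.update_of_ne htu] at *; exact predSome t ht
    · intro w l hg
      have hw := grantPC w l hg
      have hwu := hub w (by rw [hw.1]; simp)
      simp only [Function.update_of_ne hwu]; exact hw
    · intro l w hw
      rcases eq_or_ne l L with rfl | hlL
      · rw [Function.update_self] at hw
        cases hw
        simp
      · rw [Function.update_of_ne hlL] at hw
        have := tailPC l w hw
        have hwu := hub w this.1
        simp only [Function.update_of_ne hwu]; exact this
    · intro w l hw hl
      rcases eq_or_ne w u with rfl | hwu
      · simp only [Function.update_self] at hw; rcases hw with hw | hw <;> cases hw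
      · simp only [Function.update_of_ne hwu] at hw hl ⊢
        rcases eq_or_ne l L with rfl | hlL
        · rw [Function.update_self]
          intro hc; cases hc; exact hwu rfl
        · rw [Function.update_of_ne hlL]; exact exitTail w l hw hl
    · intro t w l hpc hl hp
      rcases eq_or_ne t u with rfl | htu
      · simp only [Function.update_self] at hpc; cases hpc
      · simp only [Function.update_of_ne htu] at hpc hl hp
        rcases eq_or_ne l L with rfl | hlL
        · rw [Function.update_self]
          intro hc; cases hc
          exact (waitPred t u l hpc hl hp).1 h
        · rw [Function.update_of_ne hlL]; exact waitTail t w l hpc hl hp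
    · intro t w l hpc hl hp
      rcases eq_or_ne t u with rfl | htu
      · simp only [Function.update_self] at hpc; cases hpc
      · simp only [Function.update_of_ne htu] at hpc hl hp
        have := waitPred t w l hpc hl hp
        have hwu := hub w this.1
        simp only [Function.update_of_ne hwu]; exact this
    · intro t t' w hpc hp hpc' hp'
      rcases eq_or_ne t u with rfl | htu
      · simp only [Function.update_self] at hpc; cases hpc
      · rcases eq_or_ne t' u with rfl | htu'
        · simp only [Function.update_self] at hpc'; cases hpc'
        · simp only [Function.update_of_ne htu, Function.update_of_ne htu'] at hpc hp hpc' hp'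
          exact inj t t' w hpc hp hpc' hp'
    · intro w t hw hg hpc
      rcases eq_or_ne w u with rfl | hwu
      · simp only [Function.update_self] at hw; cases hw
      · rcases eq_or_ne t u with rfl | htu
        · simp only [Function.update_self] at hpc; cases hpc
        · simp only [Function.update_of_ne hwu, Function.update_of_ne htu] at *
          exact exitGrant w t hw hg hpc
  · have hw0 := tailPC L w0 hT
    have hw0u : w0 ≠ u := hub w0 hw0.1
    refine ⟨?_, ?_, ?_, ?_, ?_, ?_, ?_, ?_, ?_⟩ <;> dsimp only
    · intro t ht
      rcases eq_or_ne t u with rfl | htu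
      · simp
      · simp only [Function.update_of_ne htu] at *; exact lkSome t ht
    · intro t ht
      rcases eq_or_ne t u with rfl | htu
      · simp
      · simp only [Function.update_of_ne htu] at *; exact predSome t ht
    · intro w l hg
      have hw := grantPC w l hg
      have hwu := hub w (by rw [hw.1]; simp)
      simp only [Function.update_of_ne hwu]; exact hw
    · intro l w hw
      rcases eq_or_ne l L with rfl | hlL
      · rw [Function.update_self] at hw
        cases hw
        simp
      · rw [Function.update_of_ne hlL] at hw
        have := tailPC l w hw
        have hwu := hub w this.1
        simp only [Function.update_of_ne hwu]; exact this
    · -- exitTail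
      intro w l hwpc hl
      rcases eq_or_ne w u with rfl | hwu
      · simp only [Function.update_self] at hwpc; rcases hwpc with hc | hc <;> cases hc
      · simp only [Function.update_of_ne hwu] at hwpc hl ⊢
        rcases eq_or_ne l L with rfl | hlL
        · rw [Function.update_self]
          intro hc; cases hc; exact hwu rfl
        · rw [Function.update_of_ne hlL]; exact exitTail w l hwpc hl
    · -- waitTail
      intro t w l hpc hl hp
      rcases eq_or_ne t u with rfl | htu
      · simp only [Function.update_self] at hpc hl hp
        cases hp; cases hl
        rw [Function.update_self]
        intro hc; cases hc; exact hw0.1 h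
      · simp only [Function.update_of_ne htu] at hpc hl hp
        rcases eq_or_ne l L with rfl | hlL
        · rw [Function.update_self]
          intro hc; cases hc
          exact (waitPred t u l hpc hl hp).1 h
        · rw [Function.update_of_ne hlL]; exact waitTail t w l hpc hl hp
    · -- waitPred
      intro t w l hpc hl hp
      rcases eq_or_ne t u with rfl | htu
      · simp only [Function.update_self] at hpc hl hp
        cases hp; cases hl
        simp only [Function.update_of_ne hw0u]
        exact hw0
      · simp only [Function.update_of_ne htu] at hpc hl hp
        have := waitPred t w l hpc hl hp
        have hwu := hub w this.1
        simp only [Function.update_of_ne hwu]; exact this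
    · -- inj
      intro t t' w hpc hp hpc' hp'
      rcases eq_or_ne t u with heqt | htu
      · rcases eq_or_ne t' u with heqt' | htu'
        · rw [heqt, heqt']
        · subst heqt
          simp only [Function.update_self] at hp
          simp only [Function.update_of_ne htu'] at hpc' hp'
          cases hp
          obtain ⟨l', hl'⟩ := Option.ne_none_iff_exists'.mp (lkSome t' (by rw [hpc']; simp))
          have h1 := waitPred t' w0 l' hpc' hl' hp'
          have h2 : l' = L := by
            have h3 := hw0.2; rw [h1.2] at h3; exact Option.some.inj h3
          subst h2
          exact absurd hT (waitTail t' w0 l' hpc' hl' hp')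
      · rcases eq_or_ne t' u with heqt' | htu'
        · subst heqt'
          simp only [Function.update_self] at hp'
          simp only [Function.update_of_ne htu] at hpc hp
          cases hp'
          obtain ⟨l', hl'⟩ := Option.ne_none_iff_exists'.mp (lkSome t (by rw [hpc]; simp))
          have h1 := waitPred t w0 l' hpc hl' hp
          have h2 : l' = L := by
            have h3 := hw0.2; rw [h1.2] at h3; exact Option.some.inj h3
          subst h2
          exact absurd hT (waitTail t w0 l' hpc hl' hp)
        · simp only [Function.update_of_ne htu, Function.update_of_ne htu'] at hpc hp hpc' hp'
          exact inj t t' w hpc hp hpc' hp'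
    · -- exitGrant
      intro w t hw hg hpc
      rcases eq_or_ne w u with rfl | hwu
      · simp only [Function.update_self] at hw; cases hw
      · simp only [Function.update_of_ne hwu] at hw hg
        rcases eq_or_ne t u with rfl | htu
        · simp only [Function.update_self]
          intro hc; cases hc
          exact exitTail w0 L (Or.inr hw) hw0.2 hT
        · simp only [Function.update_of_ne htu] at hpc ⊢
          exact exitGrant w t hw hg hpc


lemma inv_spinAcquire {u : Thread} {s : St Thread Lock} (hi : SInv s) (p : Thread) (L : Lock)
    (h : s.pc u = PC.entrySpin) (hp : s.pred u = some p) (hl : s.lk u = some L)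
    (hg : s.Grant p = some L) :
    SInv ⟨s.Tail, Function.update s.Grant p none,
        Function.update s.pc u .crit, s.lk, s.pred⟩ := by
  obtain ⟨lkSome, predSome, grantPC, tailPC, exitTail, waitTail, waitPred, inj, exitGrant⟩ := hi
  have hpu : p ≠ u := by
    intro e; have := (grantPC p L hg).1; rw [e, h] at this; cases this
  refine ⟨?_, ?_, ?_, ?_, ?_, ?_, ?_, ?_, ?_⟩ <;> dsimp only
  · intro t ht
    rcases eq_or_ne t u with rfl | htu
    · exact lkSome t (by rw [h]; simp)
    · rw [Function.update_of_ne htu] at ht; exact lkSome t ht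
  · intro t ht
    rcases eq_or_ne t u with rfl | htu
    · simp only [Function.update_self] at ht; cases ht
    · rw [Function.update_of_ne htu] at ht; exact predSome t ht
  · intro w l hgw
    rcases eq_or_ne w p with rfl | hwp
    · simp only [Function.update_self] at hgw; cases hgw
    · rw [Function.update_of_ne hwp] at hgw
      have := grantPC w l hgw
      have hwu : w ≠ u := by intro e; rw [e, h] at this; cases this.1
      rw [Function.update_of_ne hwu]; exact this
  · intro l w hw
    have := tailPC l w hw
    rcases eq_or_ne w u with rfl | hwu
    · exact ⟨by simp, this.2⟩
    · rw [Function.update_of_ne hwu]; exact this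
  · intro w l hwpc hl'
    rcases eq_or_ne w u with rfl | hwu
    · simp only [Function.update_self] at hwpc; rcases hwpc with hc | hc <;> cases hc
    · rw [Function.update_of_ne hwu] at hwpc; exact exitTail w l hwpc hl'
  · intro t w l hpc hl' hp'
    rcases eq_or_ne t u with rfl | htu
    · simp only [Function.update_self] at hpc; cases hpc
    · rw [Function.update_of_ne htu] at hpc; exact waitTail t w l hpc hl' hp'
  · intro t w l hpc hl' hp'
    rcases eq_or_ne t u with rfl | htu
    · simp only [Function.update_self] at hpc; cases hpc
    · rw [Function.update_of_ne htu] at hpc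
      have := waitPred t w l hpc hl' hp'
      rcases eq_or_ne w u with rfl | hwu
      · exact ⟨by simp, this.2⟩
      · rw [Function.update_of_ne hwu]; exact this
  · intro t t' w hpc hp' hpc' hp''
    rcases eq_or_ne t u with rfl | htu
    · simp only [Function.update_self] at hpc; cases hpc
    · rcases eq_or_ne t' u with rfl | htu'
      · simp only [Function.update_self] at hpc'; cases hpc'
      · rw [Function.update_of_ne htu] at hpc; rw [Function.update_of_ne htu'] at hpc'
        exact inj t t' w hpc hp' hpc' hp''
  · intro w t hwpc hgw hpc
    rcases eq_or_ne w u with rfl | hwu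
    · simp only [Function.update_self] at hwpc; cases hwpc
    · rcases eq_or_ne t u with rfl | htu
      · simp only [Function.update_self] at hpc; cases hpc
      · rw [Function.update_of_ne hwu] at hwpc
        rw [Function.update_of_ne htu] at hpc
        rcases eq_or_ne w p with rfl | hwp
        · intro hc
          exact htu (inj t u w hpc hc h hp)
        · rw [Function.update_of_ne hwp] at hgw
          exact exitGrant w t hwpc hgw hpc

lemma inv_exitStart {u : Thread} {s : St Thread Lock} (hi : SInv s)
    (h : s.pc u = PC.crit) :
    SInv ⟨s.Tail, s.Grant, Function.update s.pc u .exitCAS, s.lk, s.pred⟩ := by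
  obtain ⟨lkSome, predSome, grantPC, tailPC, exitTail, waitTail, waitPred, inj, exitGrant⟩ := hi
  refine ⟨?_, ?_, ?_, ?_, ?_, ?_, ?_, ?_, ?_⟩ <;> dsimp only
  · intro t ht
    rcases eq_or_ne t u with rfl | htu
    · exact lkSome t (by rw [h]; simp)
    · rw [Function.update_of_ne htu] at ht; exact lkSome t ht
  · intro t ht
    rcases eq_or_ne t u with rfl | htu
    · simp only [Function.update_self] at ht; cases ht
    · rw [Function.update_of_ne htu] at ht; exact predSome t ht
  · intro w l hgw
    have := grantPC w l hgw
    have hwu : w ≠ u := by intro e; rw [e, h] at this; cases this.1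
    rw [Function.update_of_ne hwu]; exact this
  · intro l w hw
    have := tailPC l w hw
    rcases eq_or_ne w u with rfl | hwu
    · exact ⟨by simp, this.2⟩
    · rw [Function.update_of_ne hwu]; exact this
  · intro w l hwpc hl'
    rcases eq_or_ne w u with rfl | hwu
    · simp only [Function.update_self] at hwpc; rcases hwpc with hc | hc <;> cases hc
    · rw [Function.update_of_ne hwu] at hwpc; exact exitTail w l hwpc hl'
  · intro t w l hpc hl' hp'
    rcases eq_or_ne t u with rfl | htu
    · simp only [Function.update_self] at hpc; cases hpc
    · rw [Function.update_of_ne htu] at hpc; exact waitTail t w l hpc hl' hp'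
  · intro t w l hpc hl' hp'
    rcases eq_or_ne t u with rfl | htu
    · simp only [Function.update_self] at hpc; cases hpc
    · rw [Function.update_of_ne htu] at hpc
      have := waitPred t w l hpc hl' hp'
      rcases eq_or_ne w u with rfl | hwu
      · exact ⟨by simp, this.2⟩
      · rw [Function.update_of_ne hwu]; exact this
  · intro t t' w hpc hp' hpc' hp''
    rcases eq_or_ne t u with rfl | htu
    · simp only [Function.update_self] at hpc; cases hpc
    · rcases eq_or_ne t' u with rfl | htu'
      · simp only [Function.update_self] at hpc'; cases hpc'
      · rw [Function.update_of_ne htu] at hpc; rw [Function.update_of_ne htu'] at hpc'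
        exact inj t t' w hpc hp' hpc' hp''
  · intro w t hwpc hgw hpc
    rcases eq_or_ne w u with rfl | hwu
    · simp only [Function.update_self] at hwpc; cases hwpc
    · rcases eq_or_ne t u with rfl | htu
      · simp only [Function.update_self] at hpc; cases hpc
      · rw [Function.update_of_ne hwu] at hwpc
        rw [Function.update_of_ne htu] at hpc
        exact exitGrant w t hwpc hgw hpc


lemma inv_casSucc {u : Thread} {s : St Thread Lock} (hi : SInv s) (L : Lock)
    (h : s.pc u = PC.exitCAS) (hl : s.lk u = some L) (ht : s.Tail L = some u) :
    SInv ⟨Function.update s.Tail L none, s.Grant,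
        Function.update s.pc u .remainder, Function.update s.lk u none, s.pred⟩ := by
  obtain ⟨lkSome, predSome, grantPC, tailPC, exitTail, waitTail, waitPred, inj, exitGrant⟩ := hi
  refine ⟨?_, ?_, ?_, ?_, ?_, ?_, ?_, ?_, ?_⟩ <;> dsimp only
  · intro t htt
    rcases eq_or_ne t u with rfl | htu
    · simp only [Function.update_self] at htt; exact absurd rfl htt
    · rw [Function.update_of_ne htu] at htt ⊢; exact lkSome t htt
  · intro t htt
    rcases eq_or_ne t u with rfl | htu
    · simp only [Function.update_self] at htt; cases htt
    · rw [Function.update_of_ne htu] at htt; exact predSome t htt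
  · intro w l hgw
    have h1 := grantPC w l hgw
    have hwu : w ≠ u := by intro e; rw [e, h] at h1; cases h1.1
    rw [Function.update_of_ne hwu, Function.update_of_ne hwu]; exact h1
  · intro l w hw
    rcases eq_or_ne l L with heq | hlL
    · subst heq; simp only [Function.update_self] at hw; cases hw
    · rw [Function.update_of_ne hlL] at hw
      have h1 := tailPC l w hw
      have hwu : w ≠ u := by
        intro e; rw [e, hl] at h1; exact hlL (Option.some.inj h1.2.symm) |>.elim
      rw [Function.update_of_ne hwu, Function.update_of_ne hwu]; exact h1
  · intro w l hwpc hl'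
    rcases eq_or_ne w u with rfl | hwu
    · simp only [Function.update_self] at hwpc; rcases hwpc with hc | hc <;> cases hc
    · rw [Function.update_of_ne hwu] at hwpc hl'
      rcases eq_or_ne l L with heq | hlL
      · subst heq; simp only [Function.update_self]; simp
      · rw [Function.update_of_ne hlL]; exact exitTail w l hwpc hl'
  · intro t w l hpc hl' hp'
    rcases eq_or_ne t u with rfl | htu
    · simp only [Function.update_self] at hpc; cases hpc
    · rw [Function.update_of_ne htu] at hpc hl'
      rcases eq_or_ne l L with heq | hlL
      · subst heq; simp only [Function.update_self]; simp
      · rw [Function.update_of_ne hlL]; exact waitTail t w l hpc hl' hp'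
  · intro t w l hpc hl' hp'
    rcases eq_or_ne t u with rfl | htu
    · simp only [Function.update_self] at hpc; cases hpc
    · rw [Function.update_of_ne htu] at hpc hl'
      have h1 := waitPred t w l hpc hl' hp'
      have hwu : w ≠ u := by
        intro e; subst e
        have hlL : l = L := by
          have h3 := h1.2; rw [hl] at h3; exact (Option.some.inj h3).symm
        subst hlL
        exact waitTail t w l hpc hl' hp' ht
      rw [Function.update_of_ne hwu, Function.update_of_ne hwu]; exact h1
  · intro t t' w hpc hp' hpc' hp''
    rcases eq_or_ne t u with rfl | htu
    · simp only [Function.update_self] at hpc; cases hpc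
    · rcases eq_or_ne t' u with rfl | htu'
      · simp only [Function.update_self] at hpc'; cases hpc'
      · rw [Function.update_of_ne htu] at hpc; rw [Function.update_of_ne htu'] at hpc'
        exact inj t t' w hpc hp' hpc' hp''
  · intro w t hwpc hgw hpc
    rcases eq_or_ne w u with rfl | hwu
    · simp only [Function.update_self] at hwpc; cases hwpc
    · rcases eq_or_ne t u with rfl | htu
      · simp only [Function.update_self] at hpc; cases hpc
      · rw [Function.update_of_ne hwu] at hwpc
        rw [Function.update_of_ne htu] at hpc
        exact exitGrant w t hwpc hgw hpc

lemma inv_casFail {u : Thread} {s : St Thread Lock} (hi : SInv s) (L : Lock)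
    (h : s.pc u = PC.exitCAS) (hl : s.lk u = some L) (ht : s.Tail L ≠ some u) :
    SInv ⟨s.Tail, s.Grant, Function.update s.pc u .exitDoor, s.lk, s.pred⟩ := by
  obtain ⟨lkSome, predSome, grantPC, tailPC, exitTail, waitTail, waitPred, inj, exitGrant⟩ := hi
  refine ⟨?_, ?_, ?_, ?_, ?_, ?_, ?_, ?_, ?_⟩ <;> dsimp only
  · intro t htt
    rcases eq_or_ne t u with rfl | htu
    · exact lkSome t (by rw [h]; simp)
    · rw [Function.update_of_ne htu] at htt; exact lkSome t htt
  · intro t htt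
    rcases eq_or_ne t u with rfl | htu
    · simp only [Function.update_self] at htt; cases htt
    · rw [Function.update_of_ne htu] at htt; exact predSome t htt
  · intro w l hgw
    have h1 := grantPC w l hgw
    have hwu : w ≠ u := by intro e; rw [e, h] at h1; cases h1.1
    rw [Function.update_of_ne hwu]; exact h1
  · intro l w hw
    have h1 := tailPC l w hw
    rcases eq_or_ne w u with rfl | hwu
    · exact ⟨by simp, h1.2⟩
    · rw [Function.update_of_ne hwu]; exact h1
  · intro w l hwpc hl'
    rcases eq_or_ne w u with rfl | hwu
    · have hlL : l = L := by rw [hl] at hl'; exact (Option.some.inj hl').symm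
      subst hlL; exact ht
    · rw [Function.update_of_ne hwu] at hwpc; exact exitTail w l hwpc hl'
  · intro t w l hpc hl' hp'
    rcases eq_or_ne t u with rfl | htu
    · simp only [Function.update_self] at hpc; cases hpc
    · rw [Function.update_of_ne htu] at hpc; exact waitTail t w l hpc hl' hp'
  · intro t w l hpc hl' hp'
    rcases eq_or_ne t u with rfl | htu
    · simp only [Function.update_self] at hpc; cases hpc
    · rw [Function.update_of_ne htu] at hpc
      have h1 := waitPred t w l hpc hl' hp'
      rcases eq_or_ne w u with rfl | hwu
      · exact ⟨by simp, h1.2⟩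
      · rw [Function.update_of_ne hwu]; exact h1
  · intro t t' w hpc hp' hpc' hp''
    rcases eq_or_ne t u with rfl | htu
    · simp only [Function.update_self] at hpc; cases hpc
    · rcases eq_or_ne t' u with rfl | htu'
      · simp only [Function.update_self] at hpc'; cases hpc'
      · rw [Function.update_of_ne htu] at hpc; rw [Function.update_of_ne htu'] at hpc'
        exact inj t t' w hpc hp' hpc' hp''
  · intro w t hwpc hgw hpc
    rcases eq_or_ne w u with rfl | hwu
    · simp only [Function.update_self] at hwpc; cases hwpc
    · rcases eq_or_ne t u with rfl | htu
      · simp only [Function.update_self] at hpc; cases hpc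
      · rw [Function.update_of_ne hwu] at hwpc
        rw [Function.update_of_ne htu] at hpc
        exact exitGrant w t hwpc hgw hpc

lemma inv_exitDoorstep {u : Thread} {s : St Thread Lock} (hi : SInv s) (L : Lock)
    (h : s.pc u = PC.exitDoor) (hl : s.lk u = some L) :
    SInv ⟨s.Tail, Function.update s.Grant u (some L),
        Function.update s.pc u .exitSpin, s.lk, s.pred⟩ := by
  obtain ⟨lkSome, predSome, grantPC, tailPC, exitTail, waitTail, waitPred, inj, exitGrant⟩ := hi
  refine ⟨?_, ?_, ?_, ?_, ?_, ?_, ?_, ?_, ?_⟩ <;> dsimp only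
  · intro t htt
    rcases eq_or_ne t u with rfl | htu
    · exact lkSome t (by rw [h]; simp)
    · rw [Function.update_of_ne htu] at htt; exact lkSome t htt
  · intro t htt
    rcases eq_or_ne t u with rfl | htu
    · simp only [Function.update_self] at htt; cases htt
    · rw [Function.update_of_ne htu] at htt; exact predSome t htt
  · intro w l hgw
    rcases eq_or_ne w u with rfl | hwu
    · simp only [Function.update_self] at hgw
      cases hgw
      exact ⟨by simp, hl⟩
    · rw [Function.update_of_ne hwu] at hgw
      have h1 := grantPC w l hgw
      rw [Function.update_of_ne hwu]; exact h1
  · intro l w hw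
    have h1 := tailPC l w hw
    rcases eq_or_ne w u with rfl | hwu
    · exact ⟨by simp, h1.2⟩
    · rw [Function.update_of_ne hwu]; exact h1
  · intro w l hwpc hl'
    rcases eq_or_ne w u with rfl | hwu
    · exact exitTail w l (Or.inl h) hl'
    · rw [Function.update_of_ne hwu] at hwpc; exact exitTail w l hwpc hl'
  · intro t w l hpc hl' hp'
    rcases eq_or_ne t u with rfl | htu
    · simp only [Function.update_self] at hpc; cases hpc
    · rw [Function.update_of_ne htu] at hpc; exact waitTail t w l hpc hl' hp'
  · intro t w l hpc hl' hp'
    rcases eq_or_ne t u with rfl | htu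
    · simp only [Function.update_self] at hpc; cases hpc
    · rw [Function.update_of_ne htu] at hpc
      have h1 := waitPred t w l hpc hl' hp'
      rcases eq_or_ne w u with rfl | hwu
      · exact ⟨by simp, h1.2⟩
      · rw [Function.update_of_ne hwu]; exact h1
  · intro t t' w hpc hp' hpc' hp''
    rcases eq_or_ne t u with rfl | htu
    · simp only [Function.update_self] at hpc; cases hpc
    · rcases eq_or_ne t' u with rfl | htu'
      · simp only [Function.update_self] at hpc'; cases hpc'
      · rw [Function.update_of_ne htu] at hpc; rw [Function.update_of_ne htu'] at hpc'
        exact inj t t' w hpc hp' hpc' hp''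
  · intro w t hwpc hgw hpc
    rcases eq_or_ne w u with rfl | hwu
    · simp only [Function.update_self] at hgw; cases hgw
    · rcases eq_or_ne t u with rfl | htu
      · simp only [Function.update_self] at hpc; cases hpc
      · rw [Function.update_of_ne hwu] at hwpc hgw
        rw [Function.update_of_ne htu] at hpc
        exact exitGrant w t hwpc hgw hpc

lemma inv_exitDone {u : Thread} {s : St Thread Lock} (hi : SInv s)
    (h : s.pc u = PC.exitSpin) (hg : s.Grant u = none) :
    SInv ⟨s.Tail, s.Grant, Function.update s.pc u .remainder,
        Function.update s.lk u none, s.pred⟩ := by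
  obtain ⟨lkSome, predSome, grantPC, tailPC, exitTail, waitTail, waitPred, inj, exitGrant⟩ := hi
  refine ⟨?_, ?_, ?_, ?_, ?_, ?_, ?_, ?_, ?_⟩ <;> dsimp only
  · intro t htt
    rcases eq_or_ne t u with rfl | htu
    · simp only [Function.update_self] at htt; exact absurd rfl htt
    · rw [Function.update_of_ne htu] at htt ⊢; exact lkSome t htt
  · intro t htt
    rcases eq_or_ne t u with rfl | htu
    · simp only [Function.update_self] at htt; cases htt
    · rw [Function.update_of_ne htu] at htt; exact predSome t htt
  · intro w l hgw
    have h1 := grantPC w l hgw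
    have hwu : w ≠ u := by intro e; rw [e, hg] at hgw; cases hgw
    rw [Function.update_of_ne hwu, Function.update_of_ne hwu]; exact h1
  · intro l w hw
    have h1 := tailPC l w hw
    have hwu : w ≠ u := by
      intro e; subst e
      exact exitTail w l (Or.inr h) h1.2 hw
    rw [Function.update_of_ne hwu, Function.update_of_ne hwu]; exact h1
  · intro w l hwpc hl'
    rcases eq_or_ne w u with rfl | hwu
    · simp only [Function.update_self] at hwpc; rcases hwpc with hc | hc <;> cases hc
    · rw [Function.update_of_ne hwu] at hwpc hl'; exact exitTail w l hwpc hl'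
  · intro t w l hpc hl' hp'
    rcases eq_or_ne t u with rfl | htu
    · simp only [Function.update_self] at hpc; cases hpc
    · rw [Function.update_of_ne htu] at hpc hl'; exact waitTail t w l hpc hl' hp'
  · intro t w l hpc hl' hp'
    rcases eq_or_ne t u with rfl | htu
    · simp only [Function.update_self] at hpc; cases hpc
    · rw [Function.update_of_ne htu] at hpc hl'
      have h1 := waitPred t w l hpc hl' hp'
      have hwu : w ≠ u := by
        intro e; subst e
        exact exitGrant w t h hg hpc hp'
      rw [Function.update_of_ne hwu, Function.update_of_ne hwu]; exact h1
  · intro t t' w hpc hp' hpc' hp''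
    rcases eq_or_ne t u with rfl | htu
    · simp only [Function.update_self] at hpc; cases hpc
    · rcases eq_or_ne t' u with rfl | htu'
      · simp only [Function.update_self] at hpc'; cases hpc'
      · rw [Function.update_of_ne htu] at hpc; rw [Function.update_of_ne htu'] at hpc'
        exact inj t t' w hpc hp' hpc' hp''
  · intro w t hwpc hgw hpc
    rcases eq_or_ne w u with rfl | hwu
    · simp only [Function.update_self] at hwpc; cases hwpc
    · rcases eq_or_ne t u with rfl | htu
      · simp only [Function.update_self] at hpc; cases hpc
      · rw [Function.update_of_ne hwu] at hwpc
        rw [Function.update_of_ne htu] at hpc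
        exact exitGrant w t hwpc hgw hpc

lemma inv_step {u : Thread} {s s' : St Thread Lock} (hi : SInv s) (hst : Step u s s') :
    SInv s' := by
  cases hst with
  | remainderStay h => exact hi
  | spinWait p L h hp hl hg => exact hi
  | critStay h => exact hi
  | exitSpinWait h hg => exact hi
  | doorstep L h => exact inv_doorstep hi L h
  | spinAcquire p L h hp hl hg => exact inv_spinAcquire hi p L h hp hl hg
  | exitStart h => exact inv_exitStart hi h
  | casSucc L h hl ht => exact inv_casSucc hi L h hl ht
  | casFail L h hl ht => exact inv_casFail hi L h hl ht
  | exitDoorstep L h hl => exact inv_exitDoorstep hi L h hl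
  | exitDone h hg => exact inv_exitDone hi h hg



lemma step_cases {u : Thread} {s s' : St Thread Lock} (h : Step u s s') :
    (s' = s ∧ (s.pc u = PC.remainder ∨ s.pc u = PC.crit ∨
      (s.pc u = PC.entrySpin ∧ ∃ p l, s.pred u = some p ∧ s.lk u = some l ∧ s.Grant p ≠ some l) ∨
      (s.pc u = PC.exitSpin ∧ s.Grant u ≠ none)))
    ∨ (∃ L, s.pc u = PC.remainder ∧
        s' = ⟨Function.update s.Tail L (some u), s.Grant,
          Function.update s.pc u (if s.Tail L = none then .crit else .entrySpin),
          Function.update s.lk u (some L), Function.update s.pred u (s.Tail L)⟩)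
    ∨ (∃ p L, s.pc u = PC.entrySpin ∧ s.pred u = some p ∧ s.lk u = some L ∧ s.Grant p = some L ∧
        s' = ⟨s.Tail, Function.update s.Grant p none, Function.update s.pc u .crit, s.lk, s.pred⟩)
    ∨ (s.pc u = PC.crit ∧ s' = ⟨s.Tail, s.Grant, Function.update s.pc u .exitCAS, s.lk, s.pred⟩)
    ∨ (∃ L, s.pc u = PC.exitCAS ∧ s.lk u = some L ∧ s.Tail L = some u ∧
        s' = ⟨Function.update s.Tail L none, s.Grant, Function.update s.pc u .remainder,
          Function.update s.lk u none, s.pred⟩)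
    ∨ (∃ L, s.pc u = PC.exitCAS ∧ s.lk u = some L ∧ s.Tail L ≠ some u ∧
        s' = ⟨s.Tail, s.Grant, Function.update s.pc u .exitDoor, s.lk, s.pred⟩)
    ∨ (∃ L, s.pc u = PC.exitDoor ∧ s.lk u = some L ∧
        s' = ⟨s.Tail, Function.update s.Grant u (some L),
          Function.update s.pc u .exitSpin, s.lk, s.pred⟩)
    ∨ (s.pc u = PC.exitSpin ∧ s.Grant u = none ∧
        s' = ⟨s.Tail, s.Grant, Function.update s.pc u .remainder,
          Function.update s.lk u none, s.pred⟩) := by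
  cases h with
  | remainderStay h => exact Or.inl ⟨rfl, Or.inl h⟩
  | doorstep L h => exact Or.inr (Or.inl ⟨L, h, rfl⟩)
  | spinWait p L h hp hl hg =>
      exact Or.inl ⟨rfl, Or.inr (Or.inr (Or.inl ⟨h, p, L, hp, hl, hg⟩))⟩
  | spinAcquire p L h hp hl hg =>
      exact Or.inr (Or.inr (Or.inl ⟨p, L, h, hp, hl, hg, rfl⟩))
  | critStay h => exact Or.inl ⟨rfl, Or.inr (Or.inl h)⟩
  | exitStart h => exact Or.inr (Or.inr (Or.inr (Or.inl ⟨h, rfl⟩)))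
  | casSucc L h hl ht =>
      exact Or.inr (Or.inr (Or.inr (Or.inr (Or.inl ⟨L, h, hl, ht, rfl⟩))))
  | casFail L h hl ht =>
      exact Or.inr (Or.inr (Or.inr (Or.inr (Or.inr (Or.inl ⟨L, h, hl, ht, rfl⟩)))))
  | exitDoorstep L h hl =>
      exact Or.inr (Or.inr (Or.inr (Or.inr (Or.inr (Or.inr (Or.inl ⟨L, h, hl, rfl⟩))))))
  | exitSpinWait h hg => exact Or.inl ⟨rfl, Or.inr (Or.inr (Or.inr ⟨h, hg⟩))⟩
  | exitDone h hg =>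
      exact Or.inr (Or.inr (Or.inr (Or.inr (Or.inr (Or.inr (Or.inr ⟨h, hg, rfl⟩))))))


lemma inv_all (E : Execution Thread Lock) : ∀ n, SInv (E.states n) := by
  intro n
  induction n with
  | zero => rw [E.init]; exact inv_init
  | succ n ih => exact inv_step ih (E.steps n)

lemma wait_persist (E : Execution Thread Lock) {L : Lock} {n : ℕ}
    (H : ∀ m t', n ≤ m → ¬ inCS (E.states m) t' L) {t : Thread}
    (ht : (E.states n).pc t = PC.entrySpin) (hl : (E.states n).lk t = some L) :
    ∀ m, n ≤ m → (E.states m).pc t = PC.entrySpin ∧ (E.states m).lk t = some L ∧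
      (E.states m).pred t = (E.states n).pred t := by
  intro m hm
  induction m, hm using Nat.le_induction with
  | base => exact ⟨ht, hl, rfl⟩
  | succ m hm ih =>
    obtain ⟨h1, h2, h3⟩ := ih
    by_cases hs : E.sched m = t
    · have hst := E.steps m
      rw [hs] at hst
      rcases step_cases hst with ⟨heq, -⟩ | ⟨L', hc, heq⟩ | ⟨p, L', hc, hp', hl', hg', heq⟩ |
        ⟨hc, heq⟩ | ⟨L', hc, -, -, heq⟩ | ⟨L', hc, -, -, heq⟩ | ⟨L', hc, -, heq⟩ | ⟨hc, -, heq⟩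
      · rw [heq]; exact ⟨h1, h2, h3⟩
      · rw [hc] at h1; cases h1
      · exfalso
        refine H (m+1) t (by omega) ⟨?_, ?_⟩
        · rw [heq]; simp
        · rw [heq]
          show (E.states m).lk t = some L
          exact h2
      · rw [hc] at h1; cases h1
      · rw [hc] at h1; cases h1
      · rw [hc] at h1; cases h1
      · rw [hc] at h1; cases h1
      · rw [hc] at h1; cases h1
    · have hf1 := pc_frame (E.steps m) (Ne.symm hs)
      have hf2 := lk_frame (E.steps m) (Ne.symm hs)
      have hf3 := pred_frame (E.steps m) (Ne.symm hs)
      exact ⟨hf1.trans h1, hf2.trans h2, hf3.trans h3⟩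

lemma grant_step (E : Execution Thread Lock) {L : Lock} {n : ℕ}
    (H : ∀ m t', n ≤ m → ¬ inCS (E.states m) t' L) {w : Thread} {m : ℕ} (hm : n ≤ m)
    (hg : (E.states m).Grant w = some L) : (E.states (m+1)).Grant w = some L := by
  rcases step_cases (E.steps m) with ⟨heq, -⟩ | ⟨L', hc, heq⟩ | ⟨p, L', hc, hp', hl', hg', heq⟩ |
    ⟨hc, heq⟩ | ⟨L', hc, -, -, heq⟩ | ⟨L', hc, -, -, heq⟩ | ⟨L', hc, hlw, heq⟩ | ⟨hc, -, heq⟩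
  · rw [heq]; exact hg
  · rw [heq]; exact hg
  · rw [heq]
    show Function.update (E.states m).Grant p none w = some L
    rcases eq_or_ne w p with rfl | hwp
    · exfalso
      have hLL : L' = L := by rw [hg'] at hg; exact Option.some.inj hg
      subst hLL
      refine H (m+1) (E.sched m) (by omega) ⟨?_, ?_⟩
      · rw [heq]; simp
      · rw [heq]
        show (E.states m).lk (E.sched m) = some L'
        exact hl'
    · rw [Function.update_of_ne hwp]; exact hg
  · rw [heq]; exact hg
  · rw [heq]; exact hg
  · rw [heq]; exact hg
  · rw [heq]
    show Function.update (E.states m).Grant (E.sched m) (some L') w = some L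
    rcases eq_or_ne w (E.sched m) with rfl | hwu
    · exfalso
      have := ((inv_all E m).grantPC (E.sched m) L hg).1
      rw [this] at hc; cases hc
    · rw [Function.update_of_ne hwu]; exact hg
  · rw [heq]; exact hg

lemma grant_persist (E : Execution Thread Lock) {L : Lock} {n : ℕ}
    (H : ∀ m t', n ≤ m → ¬ inCS (E.states m) t' L) {w : Thread} {m : ℕ} (hm : n ≤ m)
    (hg : (E.states m).Grant w = some L) :
    ∀ m', m ≤ m' → (E.states m').Grant w = some L := by
  intro m' hm'
  induction m', hm' using Nat.le_induction with
  | base => exact hg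
  | succ m' hm' ih => exact grant_step E H (hm.trans hm') ih

lemma notsched_frame (E : Execution Thread Lock) {w : Thread} {n : ℕ} :
    ∀ m, n ≤ m → (∀ i, n ≤ i → i < m → E.sched i ≠ w) →
    (E.states m).pc w = (E.states n).pc w ∧ (E.states m).lk w = (E.states n).lk w := by
  intro m hm
  induction m, hm using Nat.le_induction with
  | base => exact fun _ => ⟨rfl, rfl⟩
  | succ m hm ih =>
    intro hns
    have ihm := ih (fun i h1 h2 => hns i h1 (by omega))
    have hne : w ≠ E.sched m := fun e => hns m hm (by omega) e.symm
    exact ⟨(pc_frame (E.steps m) hne).trans ihm.1, (lk_frame (E.steps m) hne).trans ihm.2⟩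

lemma first_sched (E : Execution Thread Lock) {w : Thread} {n : ℕ}
    (hne : (E.states n).pc w ≠ PC.remainder) :
    ∃ m, n ≤ m ∧ E.sched m = w ∧ (E.states m).pc w = (E.states n).pc w ∧
      (E.states m).lk w = (E.states n).lk w := by
  classical
  have hex : ∃ m, n ≤ m ∧ E.sched m = w := E.fair n w hne
  have hspec := Nat.find_spec hex
  have hmin : ∀ i, n ≤ i → i < Nat.find hex → E.sched i ≠ w := by
    intro i h1 h2 h3
    exact Nat.find_min hex h2 ⟨h1, h3⟩
  obtain ⟨hpc, hlk⟩ := notsched_frame E (Nat.find hex) hspec.1 hmin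
  exact ⟨Nat.find hex, hspec.1, hspec.2, hpc, hlk⟩

lemma grant_crash (E : Execution Thread Lock) {L : Lock} {n : ℕ} {t w : Thread}
    (H : ∀ m t', n ≤ m → ¬ inCS (E.states m) t' L)
    (ht : (E.states n).pc t = PC.entrySpin) (hl : (E.states n).lk t = some L)
    (hp : (E.states n).pred t = some w)
    {m : ℕ} (hm : n ≤ m) (hg : (E.states m).Grant w = some L) : False := by
  have hw := wait_persist E H ht hl m hm
  obtain ⟨m', hm', hs⟩ := E.fair m t (by rw [hw.1]; simp)
  have hw' := wait_persist E H ht hl m' (hm.trans hm')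
  have hg' := grant_persist E H hm hg m' hm'
  have hst := E.steps m'
  rw [hs] at hst
  rcases step_cases hst with ⟨heq, hd⟩ | ⟨L', hc, heq⟩ | ⟨p, L', hc, hp', hl', hgg, heq⟩ |
    ⟨hc, heq⟩ | ⟨L', hc, -, -, heq⟩ | ⟨L', hc, -, -, heq⟩ | ⟨L', hc, -, heq⟩ | ⟨hc, -, heq⟩
  · rcases hd with hc | hc | ⟨hc, p, l, hp', hl', hgg⟩ | ⟨hc, -⟩
    · rw [hw'.1] at hc; cases hc
    · rw [hw'.1] at hc; cases hc
    · apply hgg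
      rw [hw'.2.2, hp] at hp'
      rw [hw'.2.1] at hl'
      cases hp'
      cases hl'
      exact hg'
    · rw [hw'.1] at hc; cases hc
  · rw [hw'.1] at hc; cases hc
  · refine H (m'+1) t (by omega) ⟨?_, ?_⟩
    · rw [heq]; simp
    · rw [heq]
      show (E.states m').lk t = some L
      exact hw'.2.1
  · rw [hw'.1] at hc; cases hc
  · rw [hw'.1] at hc; cases hc
  · rw [hw'.1] at hc; cases hc
  · rw [hw'.1] at hc; cases hc
  · rw [hw'.1] at hc; cases hc


lemma decr_induction {P : ℕ → Prop} {k n : ℕ} (hn : P n)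
    (hstep : ∀ j, k < j → j < n → P (j + 1) → P j) :
    ∀ j, k < j → j ≤ n → P j := by
  have key : ∀ d j, k < j → j + d = n → P j := by
    intro d
    induction d with
    | zero =>
      intro j hk hj
      have : j = n := by omega
      rw [this]; exact hn
    | succ d ih =>
      intro j hk hj
      exact hstep j hk (by omega) (ih (j+1) (by omega) (by omega))
  intro j hkj hjn
  exact key (n - j) j hkj (by omega)

lemma entry_segment (E : Execution Thread Lock) {t : Thread} {n k : ℕ}
    (hnorem : ∀ j, k < j → j ≤ n → (E.states j).pc t ≠ PC.remainder)
    (hn : (E.states n).pc t = PC.entrySpin) :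
    ∀ j, k < j → j ≤ n → (E.states j).pc t = PC.entrySpin ∧
      (E.states j).lk t = (E.states n).lk t ∧ (E.states j).pred t = (E.states n).pred t := by
  apply decr_induction (P := fun j => (E.states j).pc t = PC.entrySpin ∧
      (E.states j).lk t = (E.states n).lk t ∧ (E.states j).pred t = (E.states n).pred t)
    ⟨hn, rfl, rfl⟩
  intro j hkj hjn ih
  obtain ⟨h1, h2, h3⟩ := ih
  by_cases hs : E.sched j = t
  · have hst := E.steps j
    rw [hs] at hst
    rcases step_cases hst with ⟨heq, -⟩ | ⟨L', hc, heq⟩ | ⟨p, L', hc, -, -, -, heq⟩ |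
      ⟨hc, heq⟩ | ⟨L', hc, -, -, heq⟩ | ⟨L', hc, -, -, heq⟩ | ⟨L', hc, -, heq⟩ | ⟨hc, -, heq⟩
    · rw [heq] at h1 h2 h3; exact ⟨h1, h2, h3⟩
    · exact absurd hc (hnorem j hkj (by omega))
    · rw [heq] at h1
      simp only [Function.update_self] at h1
      cases h1
    · rw [heq] at h1
      simp only [Function.update_self] at h1
      cases h1
    · rw [heq] at h1
      simp only [Function.update_self] at h1
      cases h1
    · rw [heq] at h1
      simp only [Function.update_self] at h1
      cases h1
    · rw [heq] at h1
      simp only [Function.update_self] at h1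
      cases h1
    · rw [heq] at h1
      simp only [Function.update_self] at h1
      cases h1
  · have hf1 := pc_frame (E.steps j) (Ne.symm hs)
    have hf2 := lk_frame (E.steps j) (Ne.symm hs)
    have hf3 := pred_frame (E.steps j) (Ne.symm hs)
    exact ⟨hf1.symm.trans h1, hf2.symm.trans h2, hf3.symm.trans h3⟩

/-- anatomy of a waiting thread: its last doorstep. -/
lemma wait_anatomy (E : Execution Thread Lock) {t : Thread} {n : ℕ} {L : Lock}
    (hn : (E.states n).pc t = PC.entrySpin) (hl : (E.states n).lk t = some L) :
    ∃ k w, k < n ∧ (E.states k).Tail L = some w ∧ (E.states n).pred t = some w ∧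
      Nat.findGreatest (fun k => (E.states k).pc t = PC.remainder) n = k ∧
      (∀ j, k < j → j ≤ n → (E.states j).pc t = PC.entrySpin ∧
        (E.states j).lk t = some L ∧ (E.states j).pred t = some w) := by
  classical
  set P : ℕ → Prop := fun k => (E.states k).pc t = PC.remainder with hP
  set k := Nat.findGreatest P n with hk
  have hP0 : P 0 := by show (E.states 0).pc t = PC.remainder; rw [E.init]; rfl
  have hkP : P k := Nat.findGreatest_spec (Nat.zero_le n) hP0
  have hkn : k ≤ n := Nat.findGreatest_le n
  have hknn : k < n := by
    rcases lt_or_eq_of_le hkn with h | h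
    · exact h
    · exfalso; rw [h] at hkP; rw [hkP] at hn; cases hn
  have hnorem : ∀ j, k < j → j ≤ n → (E.states j).pc t ≠ PC.remainder := by
    intro j h1 h2
    exact Nat.findGreatest_is_greatest h1 h2
  have seg := entry_segment E hnorem hn
  have hseg1 := seg (k+1) (by omega) (by omega)
  have hsched : E.sched k = t := by
    by_contra hc
    have := pc_frame (E.steps k) (Ne.symm hc)
    rw [hseg1.1] at this
    rw [hkP] at this
    cases this
  have hst := E.steps k
  rw [hsched] at hst
  rcases step_cases hst with ⟨heq, -⟩ | ⟨L', hc, heq⟩ | ⟨p, L', hc, -, -, -, heq⟩ |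
    ⟨hc, heq⟩ | ⟨L', hc, -, -, heq⟩ | ⟨L', hc, -, -, heq⟩ | ⟨L', hc, -, heq⟩ | ⟨hc, -, heq⟩
  · exfalso
    have := hseg1.1
    rw [heq] at this
    rw [hkP] at this
    cases this
  · -- doorstep
    have hlk1 : (E.states (k+1)).lk t = some L' := by rw [heq]; simp
    have hLL : L' = L := by
      rw [hseg1.2.1, hl] at hlk1
      exact (Option.some.inj hlk1).symm
    subst hLL
    rcases hT : (E.states k).Tail L' with _ | w
    · exfalso
      have hpc1 : (E.states (k+1)).pc t = PC.crit := by rw [heq]; simp [hT]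
      rw [hseg1.1] at hpc1; cases hpc1
    · have hpred1 : (E.states (k+1)).pred t = some w := by rw [heq]; simp [hT]
      have hpredn : (E.states n).pred t = some w := by
        rw [← hseg1.2.2]; exact hpred1
      refine ⟨k, w, hknn, hT, hpredn, rfl, ?_⟩
      intro j hj1 hj2
      obtain ⟨a, b, c⟩ := seg j hj1 hj2
      exact ⟨a, by rw [b, hl], by rw [c, hpredn]⟩
  · exact absurd hc (by rw [hkP]; intro h; cases h)
  · exact absurd hc (by rw [hkP]; intro h; cases h)
  · exact absurd hc (by rw [hkP]; intro h; cases h)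
  · exact absurd hc (by rw [hkP]; intro h; cases h)
  · exact absurd hc (by rw [hkP]; intro h; cases h)
  · exact absurd hc (by rw [hkP]; intro h; cases h)

lemma descent (E : Execution Thread Lock) {t w : Thread} {n : ℕ} {L : Lock}
    (hn : (E.states n).pc t = PC.entrySpin) (hl : (E.states n).lk t = some L)
    (hp : (E.states n).pred t = some w) (hww : (E.states n).pc w = PC.entrySpin) :
    Nat.findGreatest (fun k => (E.states k).pc w = PC.remainder) n <
      Nat.findGreatest (fun k => (E.states k).pc t = PC.remainder) n := by
  classical
  obtain ⟨k, w', hkn, hT, hpredn, hkdef, hseg⟩ := wait_anatomy E hn hl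
  have hww' : w' = w := by rw [hpredn] at hp; exact Option.some.inj hp
  subst hww'
  rw [hkdef]
  set k' := Nat.findGreatest (fun k => (E.states k).pc w' = PC.remainder) n with hk'
  have hk'P : (E.states k').pc w' = PC.remainder :=
    Nat.findGreatest_spec (P := fun k => (E.states k).pc w' = PC.remainder)
      (Nat.zero_le n) (by show (E.states 0).pc w' = PC.remainder; rw [E.init]; rfl)
  have hk'n : k' ≤ n := Nat.findGreatest_le n
  have hwk : (E.states k).pc w' ≠ PC.remainder := ((inv_all E k).tailPC L w' hT).1
  by_contra hc
  push_neg at hc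
  rcases lt_or_eq_of_le hc with h | h
  · -- k < k'
    obtain ⟨a, b, c⟩ := hseg k' h hk'n
    have := ((inv_all E k').waitPred t w' L a b c).1
    exact this hk'P
  · rw [← h] at hk'P
    exact hwk hk'P

lemma door_crash (E : Execution Thread Lock) {L : Lock} {n n1 : ℕ} {t w : Thread}
    (H : ∀ m t', n ≤ m → ¬ inCS (E.states m) t' L)
    (ht : (E.states n).pc t = PC.entrySpin) (hl : (E.states n).lk t = some L)
    (hp : (E.states n).pred t = some w)
    (hn1 : n ≤ n1) (hd : (E.states n1).pc w = PC.exitDoor)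
    (hdl : (E.states n1).lk w = some L) : False := by
  obtain ⟨m1, hm1, hs, hpc1, hlk1⟩ := first_sched E (w := w) (n := n1) (by rw [hd]; simp)
  rw [hd] at hpc1
  rw [hdl] at hlk1
  have hst := E.steps m1
  rw [hs] at hst
  rcases step_cases hst with ⟨heq, hdj⟩ | ⟨L', hc, heq⟩ | ⟨p, L', hc, -, -, -, heq⟩ |
    ⟨hc, heq⟩ | ⟨L', hc, -, -, heq⟩ | ⟨L', hc, -, -, heq⟩ | ⟨L', hc, hcl, heq⟩ | ⟨hc, -, heq⟩
  · rcases hdj with hc | hc | ⟨hc, -⟩ | ⟨hc, -⟩ <;> (rw [hpc1] at hc; cases hc)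
  · rw [hpc1] at hc; cases hc
  · rw [hpc1] at hc; cases hc
  · rw [hpc1] at hc; cases hc
  · rw [hpc1] at hc; cases hc
  · rw [hpc1] at hc; cases hc
  · -- exitDoorstep
    have hLL : L' = L := by
      rw [hcl] at hlk1; exact Option.some.inj hlk1
    subst hLL
    have hg : (E.states (m1+1)).Grant w = some L' := by rw [heq]; simp
    exact grant_crash E H ht hl hp (by omega) hg
  · rw [hpc1] at hc; cases hc

/-- Deadlock freedom: if at some state some thread is in the entry code for a lock `L`,
then eventually some thread enters the critical section protected by `L`. -/
theorem deadlock_free {Thread Lock : Type} [DecidableEq Thread] [DecidableEq Lock]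
    [Fintype Thread] (E : Execution Thread Lock) (L : Lock) (T : Thread) (n : ℕ)
    (h : inEntry (E.states n) T L) :
    ∃ (m : ℕ) (T' : Thread), n ≤ m ∧ inCS (E.states m) T' L := by
  classical
  by_contra hcon
  push_neg at hcon
  have H : ∀ m t', n ≤ m → ¬ Hemlock.inCS (E.states m) t' L := fun m t' hm hc =>
    hcon m t' hm hc
  obtain ⟨hpcT, hlkT⟩ := h
  have main : ∀ k t, (E.states n).pc t = Hemlock.PC.entrySpin → (E.states n).lk t = some L →
      Nat.findGreatest (fun j => (E.states j).pc t = Hemlock.PC.remainder) n ≤ k → False := by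
    intro k
    induction k using Nat.strong_induction_on with
    | _ k ih =>
      intro t hpc hlk hle
      have hSn := inv_all E n
      obtain ⟨w, hpw⟩ := Option.ne_none_iff_exists'.mp (hSn.predSome t hpc)
      have hwp := hSn.waitPred t w L hpc hlk hpw
      by_cases hww : (E.states n).pc w = Hemlock.PC.entrySpin
      · have hlt := descent E hpc hlk hpw hww
        exact ih _ (lt_of_lt_of_le hlt hle) w hww hwp.2 le_rfl
      · rcases hpcw : (E.states n).pc w
        · exact hwp.1 hpcw
        · exact hww hpcw
        · exact H n w le_rfl ⟨hpcw, hwp.2⟩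
        · -- exitCAS
          obtain ⟨m0, hm0, hs0, hpc0', hlk0'⟩ :=
            first_sched E (w := w) (n := n) (by rw [hpcw]; simp)
          rw [hpcw] at hpc0'
          rw [hwp.2] at hlk0'
          have hw0 := wait_persist E H hpc hlk m0 hm0
          have hst := E.steps m0
          rw [hs0] at hst
          rcases step_cases hst with ⟨heq, hdj⟩ | ⟨L', hc, heq⟩ | ⟨p, L', hc, -, -, -, heq⟩ |
            ⟨hc, heq⟩ | ⟨L', hc, hcl, hT, heq⟩ | ⟨L', hc, hcl, hT, heq⟩ | ⟨L', hc, -, heq⟩ |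
            ⟨hc, -, heq⟩
          · rcases hdj with hc | hc | ⟨hc, -⟩ | ⟨hc, -⟩ <;> (rw [hpc0'] at hc; cases hc)
          · rw [hpc0'] at hc; cases hc
          · rw [hpc0'] at hc; cases hc
          · rw [hpc0'] at hc; cases hc
          · -- casSucc: impossible since t waits on w
            have hLL : L' = L := by rw [hcl] at hlk0'; exact Option.some.inj hlk0'
            subst hLL
            have hpm0 : (E.states m0).pred t = some w := by rw [hw0.2.2, hpw]
            exact (inv_all E m0).waitTail t w L' hw0.1 hw0.2.1 hpm0 hT
          · -- casFail: leads to exitDoor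
            have hLL : L' = L := by rw [hcl] at hlk0'; exact Option.some.inj hlk0'
            subst hLL
            have hd1 : (E.states (m0+1)).pc w = Hemlock.PC.exitDoor := by rw [heq]; simp
            have hd2 : (E.states (m0+1)).lk w = some L' := by
              rw [heq]
              show (E.states m0).lk w = some L'
              exact hcl
            exact door_crash E H hpc hlk hpw (by omega) hd1 hd2
          · rw [hpc0'] at hc; cases hc
          · rw [hpc0'] at hc; cases hc
        · -- exitDoor
          exact door_crash E H hpc hlk hpw le_rfl hpcw hwp.2
        · -- exitSpin
          rcases hgw : (E.states n).Grant w with _ | l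
          · exact hSn.exitGrant w t hpcw hgw hpc hpw
          · have h2 := (hSn.grantPC w l hgw).2
            have hLL : l = L := by rw [hwp.2] at h2; exact (Option.some.inj h2).symm
            subst hLL
            exact grant_crash E H hpc hlk hpw le_rfl hgw
  exact main _ T hpcT hlkT le_rfl

end Hemlock
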